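/- Let {B_N} be a sequence of finite Blaschke products. Then there exists a sequence {r_N} with 0 < r_N < 1 such that for every sequence {w_N} ⊂ 𝔻 with |w_N| ≥ r_N, there exists a sequence {ζ_N} ⊂ 𝕋 of unimodular constants such that the infinite product ∏_N ζ_N (B_N ∘ β_{w_N}) converges (i.e., the combined zero sequence satisfies the Blaschke condition). -/

import Mathlib

/-- The Möbius map `β_w(z) = (w - z)/(1 - conj(w) z)`. -/
noncomputable def mobius (w z : ℂ) : ℂ := (w - z) / (1 - (starRingEnd ℂ) w * z)

lemma sq_identity (w μ : ℂ) :
    ‖1 - (starRingEnd ℂ) w * μ‖^2 - ‖w - μ‖^2 = (1 - ‖w‖^2) * (1 - ‖μ‖^2) := by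
  simp only [← Complex.normSq_eq_norm_sq, Complex.normSq_apply,
    Complex.sub_re, Complex.sub_im, Complex.one_re, Complex.one_im, Complex.mul_re,
    Complex.mul_im, Complex.conj_re, Complex.conj_im]
  ring

lemma mob_bounds (w μ : ℂ) (hw : ‖w‖ < 1) (hμ : ‖μ‖ < 1) :
    0 ≤ 1 - ‖mobius w μ‖ ∧ 1 - ‖mobius w μ‖ ≤ 2*(1-‖w‖)/(1-‖μ‖) := by
  have hμ0 := norm_nonneg μ
  have hw0 := norm_nonneg w
  have hD : (0:ℝ) < 1 - ‖μ‖ := by linarith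
  have hDn : 1 - ‖μ‖ ≤ ‖1 - (starRingEnd ℂ) w * μ‖ := by
    have h1 := norm_sub_norm_le (1:ℂ) ((starRingEnd ℂ) w * μ)
    have h2 : ‖(starRingEnd ℂ) w * μ‖ ≤ ‖μ‖ := by
      rw [norm_mul, RCLike.norm_conj]; nlinarith
    simp only [norm_one] at h1; linarith
  have hDpos : 0 < ‖1 - (starRingEnd ℂ) w * μ‖ := lt_of_lt_of_le hD hDn
  have hid := sq_identity w μ
  have hle : ‖w - μ‖ ≤ ‖1 - (starRingEnd ℂ) w * μ‖ := by
    have hfac : 0 ≤ (1 - ‖w‖^2) * (1 - ‖μ‖^2) := mul_nonneg (by nlinarith) (by nlinarith)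
    nlinarith [norm_nonneg (w - μ), hDpos]
  have hmob : ‖mobius w μ‖ = ‖w - μ‖ / ‖1 - (starRingEnd ℂ) w * μ‖ := by
    rw [mobius, norm_div]
  constructor
  · rw [hmob]
    have := div_le_one_of_le₀ hle (le_of_lt hDpos)
    linarith
  · have hconj : (starRingEnd ℂ) w * w = ((‖w‖^2 : ℝ) : ℂ) := by
      rw [Complex.conj_mul']
      norm_cast
    have hDub : ‖1 - (starRingEnd ℂ) w * μ‖ ≤ ‖w - μ‖ + 2*(1-‖w‖) := by
      have heq : (1 - (starRingEnd ℂ) w * μ)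
          = ((1:ℂ) - (starRingEnd ℂ) w * w) + (starRingEnd ℂ) w * (w - μ) := by ring
      rw [heq]
      have h3 : ‖(1:ℂ) - (starRingEnd ℂ) w * w‖ = 1 - ‖w‖^2 := by
        rw [hconj, ← Complex.ofReal_one, ← Complex.ofReal_sub, Complex.norm_real,
          Real.norm_eq_abs, abs_of_nonneg (by nlinarith)]
      have h4 : ‖(starRingEnd ℂ) w * (w - μ)‖ ≤ ‖w - μ‖ := by
        rw [norm_mul, RCLike.norm_conj]
        nlinarith [norm_nonneg (w - μ)]
      calc ‖((1:ℂ) - (starRingEnd ℂ) w * w) + (starRingEnd ℂ) w * (w - μ)‖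
          ≤ ‖(1:ℂ) - (starRingEnd ℂ) w * w‖ + ‖(starRingEnd ℂ) w * (w - μ)‖ := norm_add_le _ _
        _ ≤ ‖w - μ‖ + 2*(1-‖w‖) := by rw [h3]; nlinarith
    rw [hmob]
    have h5 : 1 - ‖w - μ‖ / ‖1 - (starRingEnd ℂ) w * μ‖
        = (‖1 - (starRingEnd ℂ) w * μ‖ - ‖w - μ‖) / ‖1 - (starRingEnd ℂ) w * μ‖ := by
      rw [sub_div, div_self hDpos.ne']
    rw [h5]
    apply div_le_div₀ (by linarith) (by linarith) hD hDn

/-- Given a sequence of finite Blaschke products `B_N` (encoded by the multisets `Λ N`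
of their zeros, lying in the unit disk), there are radii `r_N ∈ (0,1)` such that for any
`w_N ∈ 𝔻` with `|w_N| ≥ r_N` there are unimodular constants `ζ_N` making the product
`∏_N ζ_N (B_N ∘ β_{w_N})` converge, i.e. the combined zero sequence (consisting of the
points `β_{w_N}(λ)`, `λ` a zero of `B_N`) satisfies the Blaschke condition. -/
theorem blaschke_product_of_composed_factors
    (Λ : ℕ → Multiset ℂ) (hball : ∀ N, ∀ μ ∈ Λ N, ‖μ‖ < 1) :
    ∃ r : ℕ → ℝ, (∀ N, 0 < r N ∧ r N < 1) ∧
      ∀ w : ℕ → ℂ, (∀ N, ‖w N‖ < 1) → (∀ N, r N ≤ ‖w N‖) →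
        ∃ ζ : ℕ → ℂ, (∀ N, ‖ζ N‖ = 1) ∧
          Summable (fun N => ((Λ N).map (fun μ => 1 - ‖mobius (w N) μ‖)).sum) := by
  set s : ℕ → ℝ := fun N => ((Λ N).map (fun μ => 2/(1-‖μ‖))).sum with hs_def
  have hs : ∀ N, 0 ≤ s N := by
    intro N
    apply Multiset.sum_nonneg
    intro x hx
    obtain ⟨μ, hμ, rfl⟩ := Multiset.mem_map.1 hx
    have h := hball N μ hμ
    have h2 : (0:ℝ) < 1 - ‖μ‖ := by linarith
    positivity
  refine ⟨fun N => max (1/2) (1 - (1/2)^N/(s N + 1)), fun N => ⟨?_, ?_⟩, ?_⟩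
  · exact lt_of_lt_of_le (by norm_num) (le_max_left _ _)
  · apply max_lt (by norm_num)
    have h1 : (0:ℝ) < (1/2)^N/(s N + 1) := by
      have := hs N; positivity
    linarith
  · intro w hw1 hw2
    refine ⟨fun _ => 1, fun N => norm_one, ?_⟩
    have hgeo : Summable (fun N : ℕ => (1/2:ℝ)^N) :=
      summable_geometric_of_lt_one (by norm_num) (by norm_num)
    apply Summable.of_nonneg_of_le _ _ hgeo
    · intro N
      apply Multiset.sum_nonneg
      intro x hx
      obtain ⟨μ, hμ, rfl⟩ := Multiset.mem_map.1 hx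
      exact (mob_bounds (w N) μ (hw1 N) (hball N μ hμ)).1
    · intro N
      have hwN : 1 - ‖w N‖ ≤ (1/2)^N/(s N + 1) := by
        have h1 := le_trans (le_max_right (1/2:ℝ) (1 - (1/2)^N/(s N + 1))) (hw2 N)
        linarith
      have hstep : ((Λ N).map (fun μ => 1 - ‖mobius (w N) μ‖)).sum
          ≤ ((Λ N).map (fun μ => (1 - ‖w N‖) * (2/(1-‖μ‖)))).sum := by
        apply Multiset.sum_map_le_sum_map
        intro μ hμ
        have hb := (mob_bounds (w N) μ (hw1 N) (hball N μ hμ)).2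
        have hd : (0:ℝ) < 1 - ‖μ‖ := by have := hball N μ hμ; linarith
        calc 1 - ‖mobius (w N) μ‖ ≤ 2*(1-‖w N‖)/(1-‖μ‖) := hb
          _ = (1 - ‖w N‖) * (2/(1-‖μ‖)) := by ring
      have heq : ((Λ N).map (fun μ => (1 - ‖w N‖) * (2/(1-‖μ‖)))).sum
          = (1 - ‖w N‖) * s N := by
        rw [hs_def, ← Multiset.sum_map_mul_left]
      have hfin : (1 - ‖w N‖) * s N ≤ (1/2)^N := by
        have h2 : (1 - ‖w N‖) * s N ≤ ((1/2)^N/(s N + 1)) * s N :=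
          mul_le_mul_of_nonneg_right hwN (hs N)
        have h3 : ((1/2:ℝ)^N/(s N + 1)) * s N ≤ (1/2)^N := by
          rw [div_mul_eq_mul_div, div_le_iff₀ (by have := hs N; linarith)]
          have hp : (0:ℝ) < (1/2)^N := by positivity
          nlinarith [hs N]
        linarith
      calc ((Λ N).map (fun μ => 1 - ‖mobius (w N) μ‖)).sum
          ≤ (1 - ‖w N‖) * s N := by rw [← heq]; exact hstep
        _ ≤ (1/2)^N := hfin
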